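/- A set S ⊆ ℤ^d is semi-linear (a finite union of linear sets) if and only if S is definable by an existential Presburger formula with d free variables. -/

import Mathlib

/-- A linear subset of ℤ^d: a base vector plus ℕ-combinations of finitely many periods. -/
def LinearSet {d : ℕ} (L : Set (Fin d → ℤ)) : Prop :=
  ∃ (v₀ : Fin d → ℤ) (k : ℕ) (v : Fin k → Fin d → ℤ),
    L = {x | ∃ c : Fin k → ℕ, x = v₀ + ∑ i, (c i : ℤ) • v i}

/-- A semi-linear set: a finite union of linear sets. -/
def SemiLinear {d : ℕ} (S : Set (Fin d → ℤ)) : Prop :=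
  ∃ (m : ℕ) (Ls : Fin m → Set (Fin d → ℤ)), (∀ i, LinearSet (Ls i)) ∧ S = ⋃ i, Ls i

/-- Terms of Presburger arithmetic (with a doubling function), de Bruijn-free variables. -/
inductive RTerm : Type
  | zero | one
  | var (i : ℕ)
  | add (t₁ t₂ : RTerm)
  | double (t : RTerm)
deriving DecidableEq

def RTerm.eval (env : ℕ → ℤ) : RTerm → ℤ
  | .zero => 0
  | .one => 1
  | .var i => env i
  | .add t₁ t₂ => t₁.eval env + t₂.eval env
  | .double t => 2 * t.eval env

/-- Presburger formulas (de Bruijn indices for bound variables). -/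
inductive RForm : Type
  | le (t₁ t₂ : RTerm)
  | and (f g : RForm)
  | or (f g : RForm)
  | not (f : RForm)
  | ex (f : RForm)
  | all (f : RForm)
deriving DecidableEq

def consEnv (z : ℤ) (env : ℕ → ℤ) : ℕ → ℤ := fun n =>
  match n with
  | 0 => z
  | n + 1 => env n

def RForm.Holds : RForm → (ℕ → ℤ) → Prop
  | .le t₁ t₂, env => t₁.eval env ≤ t₂.eval env
  | .and f g, env => f.Holds env ∧ g.Holds env
  | .or f g, env => f.Holds env ∨ g.Holds env
  | .not f, env => ¬ f.Holds env
  | .ex f, env => ∃ z, f.Holds (consEnv z env)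
  | .all f, env => ∀ z, f.Holds (consEnv z env)

/-- All variables of the term are `< d`. -/
def RTerm.ok (d : ℕ) : RTerm → Prop
  | .zero => True
  | .one => True
  | .var i => i < d
  | .add t₁ t₂ => t₁.ok d ∧ t₂.ok d
  | .double t => t.ok d

/-- The formula has (free) variables `< d`. -/
def RForm.ok : ℕ → RForm → Prop
  | d, .le t₁ t₂ => t₁.ok d ∧ t₂.ok d
  | d, .and f g => f.ok d ∧ g.ok d
  | d, .or f g => f.ok d ∧ g.ok d
  | d, .not f => f.ok d
  | d, .ex f => f.ok (d + 1)
  | d, .all f => f.ok (d + 1)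

def RForm.QFree : RForm → Prop
  | .le _ _ => True
  | .and f g => f.QFree ∧ g.QFree
  | .or f g => f.QFree ∧ g.QFree
  | .not f => f.QFree
  | .ex _ => False
  | .all _ => False

mutual
  /-- `SigmaR i f`: `f` is a Σ_i Presburger formula (prenex, `i ≥ 1`,
  starting with a block of existential quantifiers, `i - 1` alternations). -/
  inductive SigmaR : ℕ → RForm → Prop
    | qf {i : ℕ} {f : RForm} (hf : f.QFree) (hi : 1 ≤ i) : SigmaR i f
    | ex {i : ℕ} {f : RForm} (h : SigmaR i f) : SigmaR i (RForm.ex f)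
    | ofPi {i : ℕ} {f : RForm} (h : PiR i f) : SigmaR (i + 1) f
  /-- `PiR i f`: `f` is a Π_i Presburger formula. -/
  inductive PiR : ℕ → RForm → Prop
    | qf {i : ℕ} {f : RForm} (hf : f.QFree) (hi : 1 ≤ i) : PiR i f
    | all {i : ℕ} {f : RForm} (h : PiR i f) : PiR i (RForm.all f)
    | ofSigma {i : ℕ} {f : RForm} (h : SigmaR i f) : PiR (i + 1) f
end

def RTerm.sz : RTerm → ℕ
  | .zero => 1
  | .one => 1
  | .var i => i + 1
  | .add t₁ t₂ => t₁.sz + t₂.sz + 1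
  | .double t => t.sz + 1

/-- Size of a Presburger formula. -/
def RForm.sz : RForm → ℕ
  | .le t₁ t₂ => t₁.sz + t₂.sz + 1
  | .and f g => f.sz + g.sz + 1
  | .or f g => f.sz + g.sz + 1
  | .not f => f.sz + 1
  | .ex f => f.sz + 1
  | .all f => f.sz + 1

/-- Environment (valuation) extending a vector of ℤ^d by zeros. -/
def envOf (d : ℕ) (v : Fin d → ℤ) : ℕ → ℤ := fun n => if h : n < d then v ⟨n, h⟩ else 0



namespace SLAux

open Finset

variable {n m : ℕ}

/-- Minimal elements of a set of ℕ-vectors. -/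
def Mins (s : Set (Fin n → ℕ)) : Set (Fin n → ℕ) := {x | x ∈ s ∧ ∀ y ∈ s, y ≤ x → y = x}

lemma mins_finite (s : Set (Fin n → ℕ)) : (Mins s).Finite := by
  have hanti : IsAntichain (· ≤ ·) (Mins s) := by
    intro u hu v hv hne hle
    exact hne (hv.2 u hu.1 hle)
  have i1 : IsWellOrder ℕ (· < ·) := inferInstance
  have hpwo : (Mins s).IsPWO := Set.isPWO_of_wellQuasiOrderedLE _
  exact hanti.finite_of_partiallyWellOrderedOn hpwo

lemma sum_lt_of_le_of_ne {x y : Fin n → ℕ} (hle : y ≤ x) (hne : y ≠ x) :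
    ∑ i, y i < ∑ i, x i := by
  obtain ⟨i, hi⟩ : ∃ i, y i ≠ x i := by
    by_contra h; push_neg at h; exact hne (funext h)
  exact Finset.sum_lt_sum (fun j _ => hle j) ⟨i, Finset.mem_univ i, lt_of_le_of_ne (hle i) hi⟩

lemma exists_mins_le (s : Set (Fin n → ℕ)) (x : Fin n → ℕ) (hx : x ∈ s) :
    ∃ u ∈ Mins s, u ≤ x := by
  obtain ⟨N, hN⟩ : ∃ N, ∑ i, x i ≤ N := ⟨_, le_refl _⟩
  induction N generalizing x with
  | zero =>
    refine ⟨x, ⟨hx, fun y hy hyx => ?_⟩, le_refl x⟩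
    by_contra hne
    exact absurd (lt_of_lt_of_le (sum_lt_of_le_of_ne hyx hne) hN) (Nat.not_lt_zero _)
  | succ N ih =>
    by_cases h : ∀ y ∈ s, y ≤ x → y = x
    · exact ⟨x, ⟨hx, h⟩, le_refl x⟩
    · push_neg at h
      obtain ⟨y, hy, hyx, hne⟩ := h
      obtain ⟨u, hu, huy⟩ := ih y hy (by
        have := sum_lt_of_le_of_ne hyx hne; omega)
      exact ⟨u, hu, le_trans huy hyx⟩

/-- Solutions in ℕ-vectors of a linear system over ℤ. -/
def SolN (A : Fin m → Fin n → ℤ) (b : Fin m → ℤ) : Set (Fin n → ℕ) :=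
  {x | ∀ j, ∑ i, A j i * (x i : ℤ) = b j}

lemma sub_solN {A : Fin m → Fin n → ℤ} {b b' : Fin m → ℤ} {x u : Fin n → ℕ}
    (hx : x ∈ SolN A b) (hu : u ∈ SolN A b') (hle : u ≤ x) :
    x - u ∈ SolN A (b - b') := by
  intro j
  have : ∀ i, (((x - u) i : ℕ) : ℤ) = (x i : ℤ) - u i := by
    intro i
    rw [Pi.sub_apply, Nat.cast_sub (hle i)]
  simp only [this, mul_sub, Finset.sum_sub_distrib]
  rw [hx j, hu j]; simp

lemma add_solN {A : Fin m → Fin n → ℤ} {b b' : Fin m → ℤ} {x u : Fin n → ℕ}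
    (hx : x ∈ SolN A b) (hu : u ∈ SolN A b') :
    x + u ∈ SolN A (b + b') := by
  intro j
  have : ∀ i, (((x + u) i : ℕ) : ℤ) = (x i : ℤ) + u i := by intro i; simp
  simp only [this, mul_add, Finset.sum_add_distrib]
  rw [hx j, hu j]; simp

lemma smul_solN {A : Fin m → Fin n → ℤ} {x : Fin n → ℕ} (c : ℕ)
    (hx : x ∈ SolN A 0) : c • x ∈ SolN A 0 := by
  intro j
  have h1 : ∀ i, (((c • x) i : ℕ) : ℤ) = (c : ℤ) * x i := by intro i; simp
  have h2 : ∀ i, A j i * ((c : ℤ) * x i) = (c : ℤ) * (A j i * x i) := fun i => by ring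
  simp only [h1, h2, ← Finset.mul_sum]
  rw [hx j]; simp

lemma sum_solN {A : Fin m → Fin n → ℤ} {k : ℕ} {w : Fin k → Fin n → ℕ}
    (hw : ∀ i, w i ∈ SolN A 0) (c : Fin k → ℕ) :
    ∑ i, c i • w i ∈ SolN A 0 := by
  induction k with
  | zero => intro j; simp
  | succ k ih =>
    have h1 : (∑ i : Fin (k+1), c i • w i) = (∑ i : Fin k, c i.succ • w i.succ) + c 0 • w 0 := by
      rw [Fin.sum_univ_succ]; ring
    rw [h1]
    have := add_solN (ih (fun i => hw i.succ) (fun i => c i.succ)) (smul_solN (c 0) (hw 0))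
    simpa using this


lemma gen_sol0 (A : Fin m → Fin n → ℤ) {k : ℕ} (w : Fin k → Fin n → ℕ)
    (hw : ∀ i, w i ∈ SolN A 0)
    (hmin : ∀ x ∈ Mins (SolN A 0 \ {0}), ∃ i, w i = x)
    (x : Fin n → ℕ) (hx : x ∈ SolN A 0) :
    ∃ c : Fin k → ℕ, x = ∑ i, c i • w i := by
  classical
  obtain ⟨N, hN⟩ : ∃ N, ∑ i, x i ≤ N := ⟨_, le_refl _⟩
  induction N generalizing x with
  | zero =>
    refine ⟨0, funext fun j => ?_⟩
    have hxj : x j = 0 := by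
      have : ∑ i, x i = 0 := Nat.le_zero.mp hN
      have := Finset.sum_eq_zero_iff.mp this j (Finset.mem_univ j)
      exact this
    simp [hxj]
  | succ N ih =>
    by_cases hx0 : x = 0
    · exact ⟨0, by simp [hx0]⟩
    · have hxmem : x ∈ SolN A 0 \ {0} := ⟨hx, hx0⟩
      obtain ⟨u, hu, hux⟩ := exists_mins_le _ x hxmem
      have huS : u ∈ SolN A 0 := hu.1.1
      have hu0 : u ≠ 0 := hu.1.2
      have hsub : x - u ∈ SolN A 0 := by
        have := sub_solN hx huS hux
        simpa using this
      have hlt : ∑ i, (x - u) i < ∑ i, x i := by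
        apply sum_lt_of_le_of_ne
        · intro j; exact Nat.sub_le _ _
        · intro hcon
          obtain ⟨j, hj⟩ : ∃ j, u j ≠ 0 := by
            by_contra h; push_neg at h; exact hu0 (funext h)
          have h1 : x j - u j = x j := congrFun hcon j
          have h2 : u j ≤ x j := hux j
          omega
      obtain ⟨c, hc⟩ := ih (x - u) hsub (by omega)
      obtain ⟨i₀, hi₀⟩ := hmin u hu
      refine ⟨c + Pi.single i₀ 1, ?_⟩
      have hsingle : ∑ i, (Pi.single i₀ 1 : Fin k → ℕ) i • w i = w i₀ := by
        rw [Finset.sum_eq_single_of_mem i₀ (Finset.mem_univ i₀)]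
        · simp
        · intro b _ hb; simp [Pi.single_eq_of_ne hb]
      have : x = (x - u) + u := by
        funext j
        have h2 : u j ≤ x j := hux j
        show x j = (x j - u j) + u j
        omega
      rw [this, hc]
      simp only [Pi.add_apply, add_smul, Finset.sum_add_distrib, hsingle, hi₀]

/-- cast of an ℕ-vector to a ℤ-vector -/
def castv {n : ℕ} (x : Fin n → ℕ) : Fin n → ℤ := fun j => (x j : ℤ)

theorem sol_semilinear (A : Fin m → Fin n → ℤ) (b : Fin m → ℤ) :
    SemiLinear {x : Fin n → ℤ | (∀ i, 0 ≤ x i) ∧ ∀ j, ∑ i, A j i * x i = b j} := by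
  classical
  set W : Finset (Fin n → ℕ) := (mins_finite (SolN A 0 \ {0})).toFinset with hWdef
  set k := W.card with hk
  set w : Fin k → Fin n → ℕ := fun i => ((W.equivFin.symm i : W) : Fin n → ℕ) with hwdef
  set U : Finset (Fin n → ℕ) := (mins_finite (SolN A b)).toFinset with hUdef
  set M := U.card with hM
  set u : Fin M → Fin n → ℕ := fun t => ((U.equivFin.symm t : U) : Fin n → ℕ) with hudef
  have hwSol : ∀ i, w i ∈ SolN A 0 := by
    intro i
    have h : w i ∈ Mins (SolN A 0 \ {0}) := (Set.Finite.mem_toFinset _).mp (W.equivFin.symm i).2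
    exact h.1.1
  have hmin : ∀ x ∈ Mins (SolN A 0 \ {0}), ∃ i, w i = x := by
    intro x hx
    have hxW : x ∈ W := (Set.Finite.mem_toFinset _).mpr hx
    refine ⟨W.equivFin ⟨x, hxW⟩, ?_⟩
    simp [hwdef]
  have huSol : ∀ t, u t ∈ SolN A b := by
    intro t
    have h : u t ∈ Mins (SolN A b) := (Set.Finite.mem_toFinset _).mp (U.equivFin.symm t).2
    exact h.1
  refine ⟨M, fun t => {x | ∃ c : Fin k → ℕ, x = castv (u t) + ∑ i, (c i : ℤ) • castv (w i)},
    fun t => ⟨castv (u t), k, fun i => castv (w i), rfl⟩, ?_⟩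
  ext x
  simp only [Set.mem_setOf_eq, Set.mem_iUnion]
  constructor
  · rintro ⟨hpos, heq⟩
    set xb : Fin n → ℕ := fun i => (x i).toNat with hxb
    have hcast : ∀ i, (xb i : ℤ) = x i := fun i => Int.toNat_of_nonneg (hpos i)
    have hxbSol : xb ∈ SolN A b := by
      intro j; simpa only [hcast] using heq j
    obtain ⟨u₀, hu₀, hle⟩ := exists_mins_le _ xb hxbSol
    have hu₀U : u₀ ∈ U := (Set.Finite.mem_toFinset _).mpr hu₀
    refine ⟨U.equivFin ⟨u₀, hu₀U⟩, ?_⟩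
    have hut : u (U.equivFin ⟨u₀, hu₀U⟩) = u₀ := by simp [hudef]
    have hsub : xb - u₀ ∈ SolN A 0 := by
      have := sub_solN hxbSol hu₀.1 hle
      simpa using this
    obtain ⟨c, hc⟩ := gen_sol0 A w hwSol hmin _ hsub
    refine ⟨c, ?_⟩
    funext j
    have h1 : xb j - u₀ j = ∑ i, c i * w i j := by
      have := congrFun hc j
      simpa [Finset.sum_apply] using this
    have h2 : u₀ j ≤ xb j := hle j
    have h3 : (xb j : ℤ) = u₀ j + ∑ i, (c i : ℤ) * w i j := by
      have : (xb j : ℤ) = (u₀ j : ℤ) + ((xb j - u₀ j : ℕ) : ℤ) := by omega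
      rw [this, h1]
      push_cast
      ring
    have h4 : x j = (xb j : ℤ) := (hcast j).symm
    rw [hut]
    show x j = castv u₀ j + (∑ i, (c i : ℤ) • castv (w i)) j
    rw [Finset.sum_apply]
    simp only [Pi.smul_apply, smul_eq_mul, castv]
    rw [h4, h3]
  · rintro ⟨t, c, hx⟩
    set y : Fin n → ℕ := u t + ∑ i, c i • w i with hy
    have hxy : x = castv y := by
      funext j
      rw [hx]
      show castv (u t) j + (∑ i, (c i : ℤ) • castv (w i)) j = castv y j
      rw [Finset.sum_apply]
      simp only [Pi.smul_apply, smul_eq_mul, castv, hy]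
      have hr : (u t + ∑ i, c i • w i) j = u t j + ∑ i, c i * w i j := by
        simp [Finset.sum_apply]
      rw [hr]
      push_cast
      ring
    have hySol : y ∈ SolN A b := by
      have := add_solN (huSol t) (sum_solN hwSol c)
      rw [add_zero] at this; exact this
    constructor
    · intro i; rw [hxy]; exact Int.natCast_nonneg _
    · intro j
      have := hySol j
      rw [hxy]
      simpa [castv] using this

lemma semiLinear_empty {d : ℕ} : SemiLinear (∅ : Set (Fin d → ℤ)) :=
  ⟨0, Fin.elim0, fun i => i.elim0, by simp⟩

lemma linearSet_image {n d : ℕ} (φ : (Fin n → ℤ) →+ (Fin d → ℤ)) {L : Set (Fin n → ℤ)}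
    (h : LinearSet L) : LinearSet (φ '' L) := by
  obtain ⟨v₀, k, v, rfl⟩ := h
  refine ⟨φ v₀, k, fun i => φ (v i), ?_⟩
  ext x
  simp only [Set.mem_image, Set.mem_setOf_eq]
  constructor
  · rintro ⟨y, ⟨c, rfl⟩, rfl⟩
    refine ⟨c, ?_⟩
    rw [map_add, map_sum]
    simp only [map_zsmul]
  · rintro ⟨c, rfl⟩
    refine ⟨v₀ + ∑ i, (c i : ℤ) • v i, ⟨c, rfl⟩, ?_⟩
    rw [map_add, map_sum]
    simp only [map_zsmul]

lemma semiLinear_image {n d : ℕ} (φ : (Fin n → ℤ) →+ (Fin d → ℤ)) {S : Set (Fin n → ℤ)}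
    (h : SemiLinear S) : SemiLinear (φ '' S) := by
  obtain ⟨m, L, hL, rfl⟩ := h
  exact ⟨m, fun i => φ '' L i, fun i => linearSet_image φ (hL i), by rw [Set.image_iUnion]⟩

lemma semiLinear_union {d : ℕ} {S T : Set (Fin d → ℤ)} (hS : SemiLinear S) (hT : SemiLinear T) :
    SemiLinear (S ∪ T) := by
  obtain ⟨m1, L1, h1, rfl⟩ := hS
  obtain ⟨m2, L2, h2, rfl⟩ := hT
  refine ⟨m1 + m2, Fin.append L1 L2, ?_, ?_⟩
  · intro i
    induction i using Fin.addCases with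
    | left i => rw [Fin.append_left]; exact h1 i
    | right i => rw [Fin.append_right]; exact h2 i
  · ext x
    simp only [Set.mem_union, Set.mem_iUnion]
    constructor
    · rintro (⟨i, hi⟩ | ⟨i, hi⟩)
      · exact ⟨Fin.castAdd m2 i, by rwa [Fin.append_left]⟩
      · exact ⟨Fin.natAdd m1 i, by rwa [Fin.append_right]⟩
    · rintro ⟨i, hi⟩
      induction i using Fin.addCases with
      | left i => rw [Fin.append_left] at hi; exact Or.inl ⟨i, hi⟩
      | right i => rw [Fin.append_right] at hi; exact Or.inr ⟨i, hi⟩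

lemma semiLinear_iUnion {d m : ℕ} {T : Fin m → Set (Fin d → ℤ)} (h : ∀ i, SemiLinear (T i)) :
    SemiLinear (⋃ i, T i) := by
  induction m with
  | zero => simpa using semiLinear_empty
  | succ m ih =>
    have heq : (⋃ i, T i) = T 0 ∪ ⋃ i : Fin m, T i.succ := by
      ext x
      simp only [Set.mem_iUnion, Set.mem_union, Fin.exists_fin_succ]
    rw [heq]
    exact semiLinear_union (h 0) (ih fun i => h i.succ)

/-- The polyhedron determined by a list of inequalities `a · w ≤ c`. -/
def PolySet {d : ℕ} (C : List ((Fin d → ℤ) × ℤ)) : Set (Fin d → ℤ) :=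
  {w | ∀ p ∈ C, ∑ i, p.1 i * w i ≤ p.2}

theorem polySet_semilinear {d : ℕ} (C : List ((Fin d → ℤ) × ℤ)) : SemiLinear (PolySet C) := by
  classical
  set mm := C.length with hmm
  set a : Fin mm → Fin d → ℤ := fun j => (C.get j).1 with ha
  set bb : Fin mm → ℤ := fun j => (C.get j).2 with hbb
  set A' : Fin mm → Fin (d + d + mm) → ℤ :=
    fun j => Fin.append (Fin.append (a j) (fun i => -(a j i))) (fun j' => if j' = j then 1 else 0)
    with hA'
  set ψ : (Fin (d + d + mm) → ℤ) →+ (Fin d → ℤ) :=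
    { toFun := fun x => fun i => x (Fin.castAdd mm (Fin.castAdd d i)) - x (Fin.castAdd mm (Fin.natAdd d i))
      map_zero' := by funext i; simp
      map_add' := by intro x y; funext i; simp [Pi.add_apply]; ring } with hψ
  have hsum : ∀ (j : Fin mm) (x : Fin (d + d + mm) → ℤ),
      ∑ i, A' j i * x i = (∑ i, a j i * (ψ x) i) + x (Fin.natAdd (d + d) j) := by
    intro j x
    rw [hA']
    rw [Fin.sum_univ_add]
    have h1 : ∀ i : Fin (d + d),
        Fin.append (Fin.append (a j) (fun i => -(a j i))) (fun j' => if j' = j then (1:ℤ) else 0)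
          (Fin.castAdd mm i) = Fin.append (a j) (fun i => -(a j i)) i := fun i => Fin.append_left _ _ i
    have h2 : ∀ i : Fin mm,
        Fin.append (Fin.append (a j) (fun i => -(a j i))) (fun j' => if j' = j then (1:ℤ) else 0)
          (Fin.natAdd (d+d) i) = if i = j then (1:ℤ) else 0 := fun i => Fin.append_right _ _ i
    simp only [h1, h2]
    have h3 : ∑ i : Fin mm, (if i = j then (1:ℤ) else 0) * x (Fin.natAdd (d+d) i)
        = x (Fin.natAdd (d+d) j) := by
      rw [Finset.sum_eq_single_of_mem j (Finset.mem_univ j)]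
      · simp
      · intro b _ hb; simp [hb]
    rw [h3]
    congr 1
    rw [Fin.sum_univ_add]
    have h4 : ∀ i : Fin d, Fin.append (a j) (fun i => -(a j i)) (Fin.castAdd d i) = a j i :=
      fun i => Fin.append_left _ _ i
    have h5 : ∀ i : Fin d, Fin.append (a j) (fun i => -(a j i)) (Fin.natAdd d i) = -(a j i) :=
      fun i => Fin.append_right _ _ i
    simp only [h4, h5, hψ]
    simp only [AddMonoidHom.coe_mk, ZeroHom.coe_mk]
    rw [← Finset.sum_add_distrib]
    apply Finset.sum_congr rfl
    intro i _
    ring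
  have hmain : PolySet C = ψ '' {x : Fin (d + d + mm) → ℤ |
      (∀ i, 0 ≤ x i) ∧ ∀ j, ∑ i, A' j i * x i = bb j} := by
    ext w
    constructor
    · intro hw
      set x : Fin (d + d + mm) → ℤ :=
        Fin.append (Fin.append (fun i => ((w i).toNat : ℤ)) (fun i => (((-(w i)).toNat : ℕ) : ℤ)))
          (fun j => ((bb j - ∑ i, a j i * w i).toNat : ℤ)) with hx
      have hψx : ψ x = w := by
        funext i
        show x (Fin.castAdd mm (Fin.castAdd d i)) - x (Fin.castAdd mm (Fin.natAdd d i)) = w i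
        rw [hx]
        rw [Fin.append_left, Fin.append_left, Fin.append_left, Fin.append_right]
        omega
      refine ⟨x, ⟨?_, ?_⟩, hψx⟩
      · intro idx
        induction idx using Fin.addCases with
        | left i =>
          rw [hx, Fin.append_left]
          induction i using Fin.addCases with
          | left i => rw [Fin.append_left]; positivity
          | right i => rw [Fin.append_right]; positivity
        | right i => rw [hx, Fin.append_right]; positivity
      · intro j
        rw [hsum j x, hψx]
        have hslack : x (Fin.natAdd (d+d) j) = bb j - ∑ i, a j i * w i := by
          rw [hx, Fin.append_right]
          have hj : (C.get j) ∈ C := C.get_mem j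
          have h6 := hw _ hj
          rw [Int.toNat_of_nonneg (by
            show (0:ℤ) ≤ (C.get j).2 - ∑ i, (C.get j).1 i * w i
            omega)]
        rw [hslack]
        ring
    · rintro ⟨x, ⟨hpos, heq⟩, rfl⟩
      intro p hp
      obtain ⟨j, hj⟩ := List.mem_iff_get.mp hp
      have := heq j
      rw [hsum j x] at this
      have hslack := hpos (Fin.natAdd (d+d) j)
      have hpa : p.1 = a j := by simp only [ha]; rw [← hj]
      have hpb : p.2 = bb j := by simp only [hbb]; rw [← hj]
      rw [hpa, hpb]
      omega
  rw [hmain]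
  exact semiLinear_image ψ (sol_semilinear A' bb)


/-- Coefficients of a term, as naturals. -/
def tcoefs : RTerm → ℕ → ℕ
  | .zero => fun _ => 0
  | .one => fun _ => 0
  | .var i => fun j => if j = i then 1 else 0
  | .add t₁ t₂ => fun j => tcoefs t₁ j + tcoefs t₂ j
  | .double t => fun j => 2 * tcoefs t j

/-- Constant part of a term. -/
def tcst : RTerm → ℕ
  | .zero => 0
  | .one => 1
  | .var _ => 0
  | .add t₁ t₂ => tcst t₁ + tcst t₂
  | .double t => 2 * tcst t

lemma teval_affine {n : ℕ} (t : RTerm) (ht : t.ok n) (w : Fin n → ℤ) :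
    t.eval (envOf n w) = (tcst t : ℤ) + ∑ i : Fin n, (tcoefs t i : ℤ) * w i := by
  induction t with
  | zero => simp [RTerm.eval, tcst, tcoefs]
  | one => simp [RTerm.eval, tcst, tcoefs]
  | var i =>
    have hi : i < n := ht
    show envOf n w i = _
    rw [envOf]
    simp only [hi, dif_pos]
    rw [Finset.sum_eq_single_of_mem (⟨i, hi⟩ : Fin n) (Finset.mem_univ _)]
    · simp [tcst, tcoefs]
    · intro b _ hb
      have : (b : ℕ) ≠ i := by
        intro hcon; exact hb (Fin.ext hcon)
      simp [tcoefs, this]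
  | add t₁ t₂ ih₁ ih₂ =>
    obtain ⟨h1, h2⟩ := ht
    show t₁.eval _ + t₂.eval _ = _
    rw [ih₁ h1, ih₂ h2]
    simp only [tcst, tcoefs]
    push_cast
    have : ∑ x : Fin n, ((tcoefs t₁ x : ℤ) + tcoefs t₂ x) * w x
        = ∑ x : Fin n, (tcoefs t₁ x : ℤ) * w x + ∑ x : Fin n, (tcoefs t₂ x : ℤ) * w x := by
      rw [← Finset.sum_add_distrib]
      exact Finset.sum_congr rfl fun i _ => by ring
    rw [this]
    ring
  | double t ih =>
    show 2 * t.eval _ = _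
    rw [ih ht]
    simp only [tcst, tcoefs]
    push_cast
    have : ∑ x : Fin n, 2 * (tcoefs t x : ℤ) * w x = 2 * ∑ x : Fin n, (tcoefs t x : ℤ) * w x := by
      rw [Finset.mul_sum]
      exact Finset.sum_congr rfl fun i _ => by ring
    rw [this]
    ring

/-- Union of polyhedra given by a DNF list. -/
def Usets {d : ℕ} (L : List (List ((Fin d → ℤ) × ℤ))) : Set (Fin d → ℤ) :=
  L.foldr (fun C S => PolySet C ∪ S) ∅

lemma mem_usets {d : ℕ} (L : List (List ((Fin d → ℤ) × ℤ))) (w : Fin d → ℤ) :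
    w ∈ Usets L ↔ ∃ C ∈ L, w ∈ PolySet C := by
  induction L with
  | nil => simp [Usets]
  | cons C L ih =>
    show w ∈ PolySet C ∪ Usets L ↔ _
    simp only [Set.mem_union, ih, List.mem_cons]
    constructor
    · rintro (h | ⟨D, hD, h⟩)
      · exact ⟨C, Or.inl rfl, h⟩
      · exact ⟨D, Or.inr hD, h⟩
    · rintro ⟨D, (rfl | hD), h⟩
      · exact Or.inl h
      · exact Or.inr ⟨D, hD, h⟩

lemma usets_semilinear {d : ℕ} (L : List (List ((Fin d → ℤ) × ℤ))) : SemiLinear (Usets L) := by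
  induction L with
  | nil => exact semiLinear_empty
  | cons C L ih => exact semiLinear_union (polySet_semilinear C) ih

lemma usets_append {d : ℕ} (L₁ L₂ : List (List ((Fin d → ℤ) × ℤ))) :
    Usets (L₁ ++ L₂) = Usets L₁ ∪ Usets L₂ := by
  ext w
  simp only [mem_usets, List.mem_append, Set.mem_union]
  constructor
  · rintro ⟨C, (h | h), hw⟩
    · exact Or.inl ⟨C, h, hw⟩
    · exact Or.inr ⟨C, h, hw⟩
  · rintro (⟨C, h, hw⟩ | ⟨C, h, hw⟩)
    · exact ⟨C, Or.inl h, hw⟩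
    · exact ⟨C, Or.inr h, hw⟩

/-- DNF conjunction (cartesian product of clause lists). -/
def prodOp {d : ℕ} (L₁ L₂ : List (List ((Fin d → ℤ) × ℤ))) : List (List ((Fin d → ℤ) × ℤ)) :=
  L₁.flatMap (fun C => L₂.map (fun D => C ++ D))

lemma polySet_append {d : ℕ} (C D : List ((Fin d → ℤ) × ℤ)) :
    PolySet (C ++ D) = PolySet C ∩ PolySet D := by
  ext w
  simp only [PolySet, Set.mem_setOf_eq, Set.mem_inter_iff, List.mem_append]
  constructor
  · intro h; exact ⟨fun p hp => h p (Or.inl hp), fun p hp => h p (Or.inr hp)⟩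
  · rintro ⟨h1, h2⟩ p (hp | hp)
    · exact h1 p hp
    · exact h2 p hp

lemma usets_prodOp {d : ℕ} (L₁ L₂ : List (List ((Fin d → ℤ) × ℤ))) :
    Usets (prodOp L₁ L₂) = Usets L₁ ∩ Usets L₂ := by
  ext w
  simp only [mem_usets, Set.mem_inter_iff, prodOp, List.mem_flatMap, List.mem_map]
  constructor
  · rintro ⟨E, ⟨C, hC, D, hD, rfl⟩, hw⟩
    rw [polySet_append] at hw
    exact ⟨⟨C, hC, hw.1⟩, ⟨D, hD, hw.2⟩⟩
  · rintro ⟨⟨C, hC, hwC⟩, ⟨D, hD, hwD⟩⟩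
    exact ⟨C ++ D, ⟨C, hC, D, hD, rfl⟩, by rw [polySet_append]; exact ⟨hwC, hwD⟩⟩

/-- Negation of a single inequality. -/
def negAtom {d : ℕ} (p : (Fin d → ℤ) × ℤ) : (Fin d → ℤ) × ℤ :=
  (fun i => -(p.1 i), -p.2 - 1)

lemma mem_negAtom {d : ℕ} (p : (Fin d → ℤ) × ℤ) (w : Fin d → ℤ) :
    w ∈ PolySet [negAtom p] ↔ ¬ (∑ i, p.1 i * w i ≤ p.2) := by
  simp only [PolySet, Set.mem_setOf_eq, List.mem_singleton, forall_eq, negAtom]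
  have : ∑ i, -(p.1 i) * w i = -∑ i, p.1 i * w i := by
    rw [← Finset.sum_neg_distrib]
    exact Finset.sum_congr rfl fun i _ => by ring
  rw [this]
  omega

/-- DNF complementation. -/
def complDNF {d : ℕ} : List (List ((Fin d → ℤ) × ℤ)) → List (List ((Fin d → ℤ) × ℤ))
  | [] => [[]]
  | C :: L => prodOp (C.map fun p => [negAtom p]) (complDNF L)

lemma usets_complDNF {d : ℕ} (L : List (List ((Fin d → ℤ) × ℤ))) :
    Usets (complDNF L) = (Usets L)ᶜ := by
  induction L with
  | nil =>
    ext w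
    simp only [complDNF, mem_usets, Set.mem_compl_iff]
    simp [PolySet, Usets]
  | cons C L ih =>
    show Usets (prodOp (C.map fun p => [negAtom p]) (complDNF L)) = _
    rw [usets_prodOp, ih]
    have hC : Usets (C.map fun p => [negAtom p]) = (PolySet C)ᶜ := by
      ext w
      simp only [mem_usets, List.mem_map, Set.mem_compl_iff]
      constructor
      · rintro ⟨D, ⟨p, hp, rfl⟩, hw⟩
        rw [mem_negAtom] at hw
        intro hall
        exact hw (hall p hp)
      · intro h
        simp only [PolySet, Set.mem_setOf_eq] at h
        push_neg at h
        obtain ⟨p, hp, hpw⟩ := h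
        refine ⟨[negAtom p], ⟨p, hp, rfl⟩, (mem_negAtom p w).mpr (by omega)⟩
    rw [hC]
    have : Usets (C :: L) = PolySet C ∪ Usets L := rfl
    rw [this, Set.compl_union]

lemma qf_dnf {d : ℕ} (f : RForm) (hq : f.QFree) (hok : f.ok d) :
    ∃ L : List (List ((Fin d → ℤ) × ℤ)), {w | f.Holds (envOf d w)} = Usets L := by
  induction f with
  | le t₁ t₂ =>
    refine ⟨[[((fun i : Fin d => (tcoefs t₁ (i : ℕ) : ℤ) - tcoefs t₂ (i : ℕ)), (tcst t₂ : ℤ) - tcst t₁)]], ?_⟩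
    ext w
    show t₁.eval (envOf d w) ≤ t₂.eval (envOf d w) ↔ _
    rw [teval_affine t₁ hok.1 w, teval_affine t₂ hok.2 w, mem_usets]
    simp only [List.mem_singleton, exists_eq_left, PolySet, Set.mem_setOf_eq, forall_eq]
    have hsplit : ∑ i : Fin d, ((tcoefs t₁ (i : ℕ) : ℤ) - tcoefs t₂ (i : ℕ)) * w i
        = ∑ i : Fin d, (tcoefs t₁ (i : ℕ) : ℤ) * w i - ∑ i : Fin d, (tcoefs t₂ (i : ℕ) : ℤ) * w i := by
      rw [← Finset.sum_sub_distrib]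
      exact Finset.sum_congr rfl fun i _ => by ring
    rw [hsplit]
    omega
  | and f g ihf ihg =>
    obtain ⟨L₁, h₁⟩ := ihf hq.1 hok.1
    obtain ⟨L₂, h₂⟩ := ihg hq.2 hok.2
    refine ⟨prodOp L₁ L₂, ?_⟩
    rw [usets_prodOp, ← h₁, ← h₂]
    rfl
  | or f g ihf ihg =>
    obtain ⟨L₁, h₁⟩ := ihf hq.1 hok.1
    obtain ⟨L₂, h₂⟩ := ihg hq.2 hok.2
    refine ⟨L₁ ++ L₂, ?_⟩
    rw [usets_append, ← h₁, ← h₂]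
    rfl
  | not f ihf =>
    obtain ⟨L, h⟩ := ihf hq hok
    refine ⟨complDNF L, ?_⟩
    rw [usets_complDNF, ← h]
    rfl
  | ex f ihf => exact absurd hq id
  | all f ihf => exact absurd hq id

lemma qf_semilinear {d : ℕ} (f : RForm) (hq : f.QFree) (hok : f.ok d) :
    SemiLinear {w : Fin d → ℤ | f.Holds (envOf d w)} := by
  obtain ⟨L, hL⟩ := qf_dnf f hq hok
  rw [hL]
  exact usets_semilinear L


/-- Stack a block of `k` values on top of an environment. -/
def stack (k : ℕ) (c : Fin k → ℤ) (env : ℕ → ℤ) : ℕ → ℤ :=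
  fun n => if h : n < k then c ⟨n, h⟩ else env (n - k)

lemma stack_zero (c : Fin 0 → ℤ) (env : ℕ → ℤ) : stack 0 c env = env := by
  funext n; simp [stack]

lemma stack_snoc (k : ℕ) (c : Fin k → ℤ) (z : ℤ) (env : ℕ → ℤ) :
    stack k c (consEnv z env) = stack (k + 1) (Fin.snoc c z) env := by
  funext n
  simp only [stack]
  by_cases h : n < k
  · have h' : n < k + 1 := by omega
    simp only [dif_pos h, dif_pos h']
    have : (⟨n, h'⟩ : Fin (k+1)) = Fin.castSucc ⟨n, h⟩ := rfl
    rw [this, Fin.snoc_castSucc]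
  · by_cases h2 : n = k
    · subst h2
      have h' : n < n + 1 := by omega
      simp only [dif_neg h, dif_pos h']
      have hz : (⟨n, h'⟩ : Fin (n+1)) = Fin.last n := rfl
      rw [hz, Fin.snoc_last]
      have : n - n = 0 := by omega
      rw [this]
      rfl
    · have h' : ¬ (n < k + 1) := by omega
      simp only [dif_neg h, dif_neg h']
      have h3 : n - k = (n - (k+1)) + 1 := by omega
      rw [h3]
      rfl

/-- A block of `k` existential quantifiers. -/
def exBlock : ℕ → RForm → RForm
  | 0, g => g
  | k + 1, g => RForm.ex (exBlock k g)

lemma exBlock_holds (k : ℕ) (g : RForm) (env : ℕ → ℤ) :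
    (exBlock k g).Holds env ↔ ∃ c : Fin k → ℤ, g.Holds (stack k c env) := by
  induction k generalizing env with
  | zero =>
    constructor
    · intro h; exact ⟨Fin.elim0, by rwa [stack_zero]⟩
    · rintro ⟨c, h⟩; rwa [stack_zero] at h
  | succ k ih =>
    show (∃ z, (exBlock k g).Holds (consEnv z env)) ↔ _
    constructor
    · rintro ⟨z, h⟩
      rw [ih] at h
      obtain ⟨c, hc⟩ := h
      exact ⟨Fin.snoc c z, by rwa [← stack_snoc]⟩
    · rintro ⟨c, hc⟩
      refine ⟨c (Fin.last k), ?_⟩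
      rw [ih]
      refine ⟨Fin.init c, ?_⟩
      rw [stack_snoc, Fin.snoc_init_self]
      exact hc

lemma exBlock_ok (k : ℕ) (g : RForm) (d : ℕ) : (exBlock k g).ok d ↔ g.ok (d + k) := by
  induction k generalizing d with
  | zero => rfl
  | succ k ih =>
    show (exBlock k g).ok (d + 1) ↔ _
    rw [ih]
    have : d + 1 + k = d + (k + 1) := by omega
    rw [this]

lemma exBlock_sigma1 (k : ℕ) (g : RForm) (hg : g.QFree) : SigmaR 1 (exBlock k g) := by
  induction k with
  | zero => exact SigmaR.qf hg le_rfl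
  | succ k ih => exact SigmaR.ex ih

lemma piR_zero (f : RForm) : ¬ PiR 0 f := by
  induction f with
  | all f ih =>
    intro h
    cases h with
    | qf hf hi => omega
    | all h => exact ih h
  | le t₁ t₂ => intro h; cases h with | qf hf hi => omega
  | and f g ihf ihg => intro h; cases h with | qf hf hi => omega
  | or f g ihf ihg => intro h; cases h with | qf hf hi => omega
  | not f ih => intro h; cases h with | qf hf hi => omega
  | ex f ih => intro h; cases h with | qf hf hi => omega

lemma sigma1_decomp (f : RForm) (h : SigmaR 1 f) : ∃ k g, RForm.QFree g ∧ f = exBlock k g := by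
  induction f with
  | ex f ih =>
    cases h with
    | qf hf hi => exact absurd hf id
    | ex h' =>
      obtain ⟨k, g, hg, rfl⟩ := ih h'
      exact ⟨k + 1, g, hg, rfl⟩
    | ofPi h' => exact absurd h' (piR_zero _)
  | le t₁ t₂ =>
    cases h with
    | qf hf hi => exact ⟨0, _, hf, rfl⟩
    | ofPi h' => exact absurd h' (piR_zero _)
  | and f g ihf ihg =>
    cases h with
    | qf hf hi => exact ⟨0, _, hf, rfl⟩
    | ofPi h' => exact absurd h' (piR_zero _)
  | or f g ihf ihg =>
    cases h with
    | qf hf hi => exact ⟨0, _, hf, rfl⟩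
    | ofPi h' => exact absurd h' (piR_zero _)
  | not f ih =>
    cases h with
    | qf hf hi => exact ⟨0, _, hf, rfl⟩
    | ofPi h' => exact absurd h' (piR_zero _)
  | all f ih =>
    cases h with
    | qf hf hi => exact absurd hf id
    | ofPi h' => exact absurd h' (piR_zero _)

lemma teval_congr (t : RTerm) (n : ℕ) (ht : t.ok n) {e₁ e₂ : ℕ → ℤ}
    (h : ∀ i < n, e₁ i = e₂ i) : t.eval e₁ = t.eval e₂ := by
  induction t with
  | zero => rfl
  | one => rfl
  | var i => exact h i ht
  | add t₁ t₂ ih₁ ih₂ =>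
    show t₁.eval e₁ + t₂.eval e₁ = t₁.eval e₂ + t₂.eval e₂
    rw [ih₁ ht.1, ih₂ ht.2]
  | double t ih =>
    show 2 * t.eval e₁ = 2 * t.eval e₂
    rw [ih ht]

lemma holds_congr (f : RForm) (n : ℕ) (hf : f.ok n) {e₁ e₂ : ℕ → ℤ}
    (h : ∀ i < n, e₁ i = e₂ i) : (f.Holds e₁ ↔ f.Holds e₂) := by
  induction f generalizing n e₁ e₂ with
  | le t₁ t₂ =>
    show t₁.eval e₁ ≤ t₂.eval e₁ ↔ t₁.eval e₂ ≤ t₂.eval e₂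
    rw [teval_congr t₁ n hf.1 h, teval_congr t₂ n hf.2 h]
  | and f g ihf ihg =>
    show (f.Holds e₁ ∧ g.Holds e₁) ↔ (f.Holds e₂ ∧ g.Holds e₂)
    rw [ihf n hf.1 h, ihg n hf.2 h]
  | or f g ihf ihg =>
    show (f.Holds e₁ ∨ g.Holds e₁) ↔ (f.Holds e₂ ∨ g.Holds e₂)
    rw [ihf n hf.1 h, ihg n hf.2 h]
  | not f ih =>
    show ¬ f.Holds e₁ ↔ ¬ f.Holds e₂
    rw [ih n hf h]
  | ex f ih =>
    show (∃ z, f.Holds (consEnv z e₁)) ↔ _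
    constructor
    · rintro ⟨z, hz⟩
      refine ⟨z, (ih (n+1) hf ?_).mp hz⟩
      intro i hi
      match i with
      | 0 => rfl
      | i + 1 => exact h i (by omega)
    · rintro ⟨z, hz⟩
      refine ⟨z, (ih (n+1) hf ?_).mpr hz⟩
      intro i hi
      match i with
      | 0 => rfl
      | i + 1 => exact h i (by omega)
  | all f ih =>
    show (∀ z, f.Holds (consEnv z e₁)) ↔ _
    constructor
    · intro hz z
      refine (ih (n+1) hf ?_).mp (hz z)
      intro i hi
      match i with
      | 0 => rfl
      | i + 1 => exact h i (by omega)
    · intro hz z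
      refine (ih (n+1) hf ?_).mpr (hz z)
      intro i hi
      match i with
      | 0 => rfl
      | i + 1 => exact h i (by omega)


lemma backward {d : ℕ} (f : RForm) (hs : SigmaR 1 f) (hok : f.ok d) :
    SemiLinear {v : Fin d → ℤ | f.Holds (envOf d v)} := by
  obtain ⟨k, g, hg, rfl⟩ := sigma1_decomp f hs
  rw [exBlock_ok] at hok
  have hok' : g.ok (k + d) := by rwa [Nat.add_comm] at hok
  have hT : SemiLinear {w : Fin (k + d) → ℤ | g.Holds (envOf (k + d) w)} :=
    qf_semilinear g hg hok'
  set π : (Fin (k + d) → ℤ) →+ (Fin d → ℤ) :=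
    { toFun := fun w => fun j => w (Fin.natAdd k j)
      map_zero' := rfl
      map_add' := fun x y => rfl } with hπ
  have hmain : {v : Fin d → ℤ | (exBlock k g).Holds (envOf d v)}
      = π '' {w : Fin (k + d) → ℤ | g.Holds (envOf (k + d) w)} := by
    ext v
    rw [Set.mem_setOf_eq, exBlock_holds]
    constructor
    · rintro ⟨c, hc⟩
      set w : Fin (k + d) → ℤ := fun i => stack k c (envOf d v) (i : ℕ) with hw
      have hagree : ∀ i < k + d, envOf (k + d) w i = stack k c (envOf d v) i := by
        intro i hi
        rw [envOf]
        simp only [dif_pos hi]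
        rfl
      refine ⟨w, ?_, ?_⟩
      · rw [Set.mem_setOf_eq]
        exact (holds_congr g (k + d) hok' hagree).mpr hc
      · funext j
        show w (Fin.natAdd k j) = v j
        show stack k c (envOf d v) (k + (j : ℕ)) = v j
        rw [stack]
        have h1 : ¬ (k + (j : ℕ) < k) := by omega
        simp only [dif_neg h1]
        have h2 : k + (j : ℕ) - k = (j : ℕ) := by omega
        rw [h2, envOf]
        simp only [j.isLt, dif_pos, Fin.eta]
    · rintro ⟨w, hwT, rfl⟩
      refine ⟨fun i => w (Fin.castAdd d i), ?_⟩
      have hagree : ∀ i < k + d, envOf (k + d) w i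
          = stack k (fun i => w (Fin.castAdd d i)) (envOf d (π w)) i := by
        intro i hi
        rw [envOf, stack]
        simp only [dif_pos hi]
        by_cases hik : i < k
        · simp only [dif_pos hik]
          exact congrArg w (Fin.ext rfl)
        · simp only [dif_neg hik]
          have hid : i - k < d := by omega
          rw [envOf]
          simp only [dif_pos hid]
          show w ⟨i, hi⟩ = w (Fin.natAdd k ⟨i - k, hid⟩)
          exact congrArg w (Fin.ext (by show i = k + (i - k); omega))
      exact (holds_congr g (k + d) hok' hagree).mp hwT
  rw [hmain]
  exact semiLinear_image π hT


def cNt : ℕ → RTerm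
  | 0 => RTerm.zero
  | a + 1 => RTerm.add RTerm.one (cNt a)

lemma cNt_eval (env : ℕ → ℤ) (a : ℕ) : (cNt a).eval env = a := by
  induction a with
  | zero => rfl
  | succ a ih =>
    show 1 + (cNt a).eval env = _
    rw [ih]; push_cast; ring

lemma cNt_ok (d a : ℕ) : (cNt a).ok d := by
  induction a with
  | zero => trivial
  | succ a ih => exact ⟨trivial, ih⟩

def nmul (a : ℕ) (t : RTerm) : RTerm := match a with
  | 0 => RTerm.zero
  | a + 1 => RTerm.add t (nmul a t)

lemma nmul_eval (env : ℕ → ℤ) (a : ℕ) (t : RTerm) :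
    (nmul a t).eval env = a * t.eval env := by
  induction a with
  | zero => show (0:ℤ) = _; push_cast; ring
  | succ a ih =>
    show t.eval env + (nmul a t).eval env = _
    rw [ih]; push_cast; ring

lemma nmul_ok (d a : ℕ) (t : RTerm) (h : t.ok d) : (nmul a t).ok d := by
  induction a with
  | zero => trivial
  | succ a ih => exact ⟨h, ih⟩

def tsum (l : List RTerm) : RTerm := l.foldr RTerm.add RTerm.zero

lemma tsum_eval (env : ℕ → ℤ) (l : List RTerm) :
    (tsum l).eval env = (l.map (RTerm.eval env)).sum := by
  induction l with
  | nil => rfl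
  | cons t l ih =>
    show t.eval env + (tsum l).eval env = _
    rw [ih, List.map_cons, List.sum_cons]

lemma tsum_ok (d : ℕ) (l : List RTerm) (h : ∀ t ∈ l, RTerm.ok d t) : (tsum l).ok d := by
  induction l with
  | nil => trivial
  | cons t l ih => exact ⟨h t (List.mem_cons_self ..), ih fun t ht => h t (List.mem_cons_of_mem _ ht)⟩

def feqF (t₁ t₂ : RTerm) : RForm := RForm.and (RForm.le t₁ t₂) (RForm.le t₂ t₁)

lemma feqF_holds (env : ℕ → ℤ) (t₁ t₂ : RTerm) :
    (feqF t₁ t₂).Holds env ↔ t₁.eval env = t₂.eval env := by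
  show (t₁.eval env ≤ t₂.eval env ∧ t₂.eval env ≤ t₁.eval env) ↔ _
  omega

def fandF (l : List RForm) : RForm := l.foldr RForm.and (RForm.le RTerm.zero RTerm.zero)

lemma fandF_holds (env : ℕ → ℤ) (l : List RForm) :
    (fandF l).Holds env ↔ ∀ f ∈ l, f.Holds env := by
  induction l with
  | nil =>
    show (RTerm.zero.eval env ≤ RTerm.zero.eval env) ↔ _
    simp [RTerm.eval]
  | cons f l ih =>
    show (f.Holds env ∧ (fandF l).Holds env) ↔ _
    rw [ih]
    simp

lemma fandF_ok (d : ℕ) (l : List RForm) (h : ∀ f ∈ l, RForm.ok d f) : (fandF l).ok d := by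
  induction l with
  | nil => exact ⟨trivial, trivial⟩
  | cons f l ih => exact ⟨h f (List.mem_cons_self ..), ih fun f hf => h f (List.mem_cons_of_mem _ hf)⟩

lemma fandF_qfree (l : List RForm) (h : ∀ f ∈ l, RForm.QFree f) : (fandF l).QFree := by
  induction l with
  | nil => exact trivial
  | cons f l ih => exact ⟨h f (List.mem_cons_self ..), ih fun f hf => h f (List.mem_cons_of_mem _ hf)⟩

def forlF (l : List RForm) : RForm := l.foldr RForm.or (RForm.le RTerm.one RTerm.zero)

lemma forlF_holds (env : ℕ → ℤ) (l : List RForm) :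
    (forlF l).Holds env ↔ ∃ f ∈ l, f.Holds env := by
  induction l with
  | nil =>
    show (RTerm.one.eval env ≤ RTerm.zero.eval env) ↔ _
    show ((1:ℤ) ≤ 0) ↔ _
    simp
  | cons f l ih =>
    show (f.Holds env ∨ (forlF l).Holds env) ↔ _
    rw [ih]
    simp

lemma forlF_ok (d : ℕ) (l : List RForm) (h : ∀ f ∈ l, RForm.ok d f) : (forlF l).ok d := by
  induction l with
  | nil => exact ⟨trivial, trivial⟩
  | cons f l ih => exact ⟨h f (List.mem_cons_self ..), ih fun f hf => h f (List.mem_cons_of_mem _ hf)⟩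

lemma forlF_qfree (l : List RForm) (h : ∀ f ∈ l, RForm.QFree f) : (forlF l).QFree := by
  induction l with
  | nil => exact trivial
  | cons f l ih => exact ⟨h f (List.mem_cons_self ..), ih fun f hf => h f (List.mem_cons_of_mem _ hf)⟩

lemma sumvar_eval (env : ℕ → ℤ) {k : ℕ} (aa : Fin k → ℕ) :
    (tsum (List.ofFn fun i : Fin k => nmul (aa i) (RTerm.var (i : ℕ)))).eval env
      = ∑ i : Fin k, (aa i : ℤ) * env (i : ℕ) := by
  rw [tsum_eval, List.map_ofFn, List.sum_ofFn]
  exact Finset.sum_congr rfl fun i _ => by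
    show (nmul (aa i) (RTerm.var (i : ℕ))).eval env = _
    rw [nmul_eval]
    rfl

/-- The quantifier-free body describing membership in one linear set,
with `K` existentially quantified variables available. -/
def pieceBody (K : ℕ) {d k : ℕ} (v₀ : Fin d → ℤ) (vv : Fin k → Fin d → ℤ) : RForm :=
  RForm.and
    (fandF (List.ofFn fun j : Fin d =>
      feqF (tsum [RTerm.var (K + (j : ℕ)), cNt ((-(v₀ j)).toNat),
            tsum (List.ofFn fun i : Fin k => nmul ((-(vv i j)).toNat) (RTerm.var (i : ℕ)))])
          (tsum [cNt ((v₀ j).toNat),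
            tsum (List.ofFn fun i : Fin k => nmul ((vv i j).toNat) (RTerm.var (i : ℕ)))])))
    (fandF (List.ofFn fun i : Fin k => RForm.le RTerm.zero (RTerm.var (i : ℕ))))

lemma pieceBody_qfree (K : ℕ) {d k : ℕ} (v₀ : Fin d → ℤ) (vv : Fin k → Fin d → ℤ) :
    (pieceBody K v₀ vv).QFree := by
  constructor
  · apply fandF_qfree
    intro f hf
    obtain ⟨j, rfl⟩ := List.mem_ofFn.mp hf
    exact ⟨trivial, trivial⟩
  · apply fandF_qfree
    intro f hf
    obtain ⟨i, rfl⟩ := List.mem_ofFn.mp hf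
    trivial

lemma pieceBody_ok (K : ℕ) {d k : ℕ} (hkK : k ≤ K) (v₀ : Fin d → ℤ)
    (vv : Fin k → Fin d → ℤ) : (pieceBody K v₀ vv).ok (d + K) := by
  constructor
  · apply fandF_ok
    intro f hf
    obtain ⟨j, rfl⟩ := List.mem_ofFn.mp hf
    have hL : RTerm.ok (d + K) (tsum [RTerm.var (K + (j : ℕ)), cNt ((-(v₀ j)).toNat),
        tsum (List.ofFn fun i : Fin k => nmul ((-(vv i j)).toNat) (RTerm.var (i : ℕ)))]) := by
      apply tsum_ok
      intro t ht
      simp only [List.mem_cons, List.not_mem_nil, or_false] at ht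
      rcases ht with rfl | rfl | rfl
      · show K + (j : ℕ) < d + K
        have := j.isLt; omega
      · exact cNt_ok _ _
      · apply tsum_ok
        intro t ht
        obtain ⟨i, rfl⟩ := List.mem_ofFn.mp ht
        apply nmul_ok
        show (i : ℕ) < d + K
        have := i.isLt; omega
    have hR : RTerm.ok (d + K) (tsum [cNt ((v₀ j).toNat),
        tsum (List.ofFn fun i : Fin k => nmul ((vv i j)).toNat (RTerm.var (i : ℕ)))]) := by
      apply tsum_ok
      intro t ht
      simp only [List.mem_cons, List.not_mem_nil, or_false] at ht
      rcases ht with rfl | rfl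
      · exact cNt_ok _ _
      · apply tsum_ok
        intro t ht
        obtain ⟨i, rfl⟩ := List.mem_ofFn.mp ht
        apply nmul_ok
        show (i : ℕ) < d + K
        have := i.isLt; omega
    exact ⟨⟨hL, hR⟩, ⟨hR, hL⟩⟩
  · apply fandF_ok
    intro f hf
    obtain ⟨i, rfl⟩ := List.mem_ofFn.mp hf
    refine ⟨trivial, ?_⟩
    show (i : ℕ) < d + K
    have := i.isLt; omega

lemma pieceBody_holds (K : ℕ) {d k : ℕ} (v₀ : Fin d → ℤ) (vv : Fin k → Fin d → ℤ)
    (env : ℕ → ℤ) :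
    (pieceBody K v₀ vv).Holds env ↔
      ((∀ j : Fin d, env (K + (j : ℕ)) = v₀ j + ∑ i : Fin k, env (i : ℕ) * vv i j)
        ∧ ∀ i : Fin k, 0 ≤ env (i : ℕ)) := by
  have hPN : ∀ j : Fin d, ∑ i : Fin k, ((vv i j).toNat : ℤ) * env (i : ℕ)
      - ∑ i : Fin k, (((-(vv i j)).toNat : ℕ) : ℤ) * env (i : ℕ)
      = ∑ i : Fin k, env (i : ℕ) * vv i j := by
    intro j
    rw [← Finset.sum_sub_distrib]
    refine Finset.sum_congr rfl fun i _ => ?_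
    have hv : ((vv i j).toNat : ℤ) - (((-(vv i j)).toNat : ℕ) : ℤ) = vv i j := by omega
    rw [← sub_mul, hv, mul_comm]
  show ((fandF _).Holds env ∧ (fandF _).Holds env) ↔ _
  rw [fandF_holds, fandF_holds]
  constructor
  · rintro ⟨h1, h2⟩
    constructor
    · intro j
      have h0 := h1 _ (List.mem_ofFn.mpr ⟨j, rfl⟩)
      rw [feqF_holds, tsum_eval, tsum_eval] at h0
      simp only [List.map_cons, List.map_nil, List.sum_cons, List.sum_nil] at h0
      rw [sumvar_eval, sumvar_eval, cNt_eval, cNt_eval] at h0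
      have hthis : env (K + (j : ℕ)) + ((((-(v₀ j)).toNat : ℕ) : ℤ)
            + (∑ i : Fin k, (((-(vv i j)).toNat : ℕ) : ℤ) * env (i : ℕ) + 0))
          = (((v₀ j).toNat : ℕ) : ℤ)
            + (∑ i : Fin k, ((vv i j).toNat : ℤ) * env (i : ℕ) + 0) := h0
      have hp := hPN j
      omega
    · intro i
      exact h2 _ (List.mem_ofFn.mpr ⟨i, rfl⟩)
  · rintro ⟨h1, h2⟩
    constructor
    · intro f hf
      obtain ⟨j, rfl⟩ := List.mem_ofFn.mp hf
      rw [feqF_holds, tsum_eval, tsum_eval]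
      simp only [List.map_cons, List.map_nil, List.sum_cons, List.sum_nil]
      rw [sumvar_eval, sumvar_eval, cNt_eval, cNt_eval]
      show env (K + (j : ℕ)) + ((((-(v₀ j)).toNat : ℕ) : ℤ)
            + (∑ i : Fin k, (((-(vv i j)).toNat : ℕ) : ℤ) * env (i : ℕ) + 0))
          = (((v₀ j).toNat : ℕ) : ℤ)
            + (∑ i : Fin k, ((vv i j).toNat : ℤ) * env (i : ℕ) + 0)
      have hj := h1 j
      have hp := hPN j
      omega
    · intro f hf
      obtain ⟨i, rfl⟩ := List.mem_ofFn.mp hf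
      exact h2 i

lemma piece_mem (K : ℕ) {d k : ℕ} (hkK : k ≤ K) (v₀ : Fin d → ℤ)
    (vv : Fin k → Fin d → ℤ) (x : Fin d → ℤ) :
    (∃ c : Fin K → ℤ, (pieceBody K v₀ vv).Holds (stack K c (envOf d x)))
      ↔ ∃ c : Fin k → ℕ, x = v₀ + ∑ i, (c i : ℤ) • vv i := by
  have hpt : ∀ (c : Fin k → ℕ) (j : Fin d),
      (v₀ + ∑ i, (c i : ℤ) • vv i) j = v₀ j + ∑ i, (c i : ℤ) * vv i j := by
    intro c j
    simp [Finset.sum_apply]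
  have he2 : ∀ (c : Fin K → ℤ) (j : Fin d), stack K c (envOf d x) (K + (j : ℕ)) = x j := by
    intro c j
    rw [stack]
    have h1 : ¬ (K + (j : ℕ) < K) := by omega
    simp only [dif_neg h1]
    have h2 : K + (j : ℕ) - K = (j : ℕ) := by omega
    rw [h2, envOf]
    simp only [j.isLt, dif_pos, Fin.eta]
  have he1 : ∀ (c : Fin K → ℤ) (i : Fin k), stack K c (envOf d x) (i : ℕ)
      = c ⟨(i : ℕ), by have := i.isLt; omega⟩ := by
    intro c i
    rw [stack]
    simp only [dif_pos (show (i : ℕ) < K by have := i.isLt; omega)]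
  constructor
  · rintro ⟨c, hc⟩
    rw [pieceBody_holds] at hc
    obtain ⟨heq, hpos⟩ := hc
    refine ⟨fun i => (c ⟨(i : ℕ), by have := i.isLt; omega⟩).toNat, ?_⟩
    funext j
    rw [hpt]
    have h3 := heq j
    rw [he2 c j] at h3
    rw [h3]
    congr 1
    refine Finset.sum_congr rfl fun i _ => ?_
    have h4 := hpos i
    rw [he1 c i] at h4
    rw [he1 c i]
    rw [Int.toNat_of_nonneg h4]
  · rintro ⟨cc, hcc⟩
    refine ⟨fun i => if h : (i : ℕ) < k then (cc ⟨(i : ℕ), h⟩ : ℤ) else 0, ?_⟩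
    rw [pieceBody_holds]
    constructor
    · intro j
      rw [he2]
      simp only [he1]
      have h5 := congrFun hcc j
      rw [hpt] at h5
      rw [h5]
      congr 1
      refine Finset.sum_congr rfl fun i _ => ?_
      congr 1
      simp [i.isLt]
    · intro i
      rw [he1]
      simp [i.isLt, Int.natCast_nonneg]

lemma forward {d : ℕ} (S : Set (Fin d → ℤ)) (h : SemiLinear S) :
    ∃ f : RForm, SigmaR 1 f ∧ f.ok d ∧ S = {v | f.Holds (envOf d v)} := by
  classical
  obtain ⟨m, Ls, hLs, rfl⟩ := h
  choose v₀ kk vv hvv using hLs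
  set K := Finset.univ.sup kk with hK
  have hkK : ∀ t, kk t ≤ K := fun t => Finset.le_sup (Finset.mem_univ t)
  refine ⟨exBlock K (forlF (List.ofFn fun t : Fin m => pieceBody K (v₀ t) (vv t))), ?_, ?_, ?_⟩
  · apply exBlock_sigma1
    apply forlF_qfree
    intro f hf
    obtain ⟨t, rfl⟩ := List.mem_ofFn.mp hf
    exact pieceBody_qfree K (v₀ t) (vv t)
  · rw [exBlock_ok]
    apply forlF_ok
    intro f hf
    obtain ⟨t, rfl⟩ := List.mem_ofFn.mp hf
    exact pieceBody_ok K (hkK t) (v₀ t) (vv t)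
  · ext x
    simp only [Set.mem_iUnion, Set.mem_setOf_eq]
    rw [exBlock_holds]
    constructor
    · rintro ⟨t, hx⟩
      rw [hvv t] at hx
      obtain ⟨c, hc⟩ := (piece_mem K (hkK t) (v₀ t) (vv t) x).mpr hx
      refine ⟨c, ?_⟩
      rw [forlF_holds]
      exact ⟨_, List.mem_ofFn.mpr ⟨t, rfl⟩, hc⟩
    · rintro ⟨c, hc⟩
      rw [forlF_holds] at hc
      obtain ⟨g, hg, hgh⟩ := hc
      obtain ⟨t, rfl⟩ := List.mem_ofFn.mp hg
      refine ⟨t, ?_⟩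
      rw [hvv t]
      exact (piece_mem K (hkK t) (v₀ t) (vv t) x).mp ⟨c, hgh⟩


end SLAux

/-- A set `S ⊆ ℤ^d` is semi-linear iff it is definable by an
existential Presburger formula with `d` free variables. -/
theorem semilinear_iff_existential_presburger (d : ℕ) (S : Set (Fin d → ℤ)) :
    SemiLinear S ↔
      ∃ f : RForm, SigmaR 1 f ∧ f.ok d ∧ S = {v | f.Holds (envOf d v)} := by
  constructor
  · exact SLAux.forward S
  · rintro ⟨f, hs, hok, rfl⟩
    exact SLAux.backward f hs hok
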